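/- Let V(u) = ½(−Σ_{i=1}^m λᵢ² uᵢ² + Σ_{i=m+1}^n λᵢ² uᵢ²) with λᵢ > 0, η a unit vector in span{e_{m+1},…,e_n}, λ_η as above, and let g solve g'(s) = −λ₁ g/√(s²λ_η² − λ₁²g²) on (1, s₀] with g(1) = λ_η/λ₁. Then the perturbed path v̄(s) = sη + g(s)e₁ satisfies √(V(v̄(s))) √(1 + g'(s)²) = √(V(sη)) for s ∈ (1, s₀], hence 𝒥_V(v̄, (1, s₀)) = 𝒥_V(ū, (1, s₀)) where ū(s) = sη. -/

import Mathlib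

open Set Real

/-- Equality of Jacobi lengths (38): along the perturbed path
`v̄(s) = sη + g(s)e₁`, where `g` solves the ODE (37) and `e₁` is a coordinate
direction with negative eigenvalue `−λ₁²`, one has
`√(V(v̄(s)))√(1+g'(s)²) = √(V(sη))` on `(1,s₀]`, hence
`𝒥_V(v̄,(1,s₀)) = 𝒥_V(ū,(1,s₀))`. -/
theorem jacobi_of_perturbed_path (n m : ℕ) (hm : 1 ≤ m) (hmn : m < n)
    (lam : Fin n → ℝ) (hlam : ∀ i, 0 < lam i)
    (V : EuclideanSpace ℝ (Fin n) → ℝ)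
    (hV : ∀ u : EuclideanSpace ℝ (Fin n),
      V u = (1 : ℝ) / 2 *
        ∑ i : Fin n, (if (i : ℕ) < m then -(lam i) ^ 2 else (lam i) ^ 2) * (u i) ^ 2)
    (η : EuclideanSpace ℝ (Fin n)) (hη : ‖η‖ = 1)
    (hsupp : ∀ i : Fin n, (i : ℕ) < m → η i = 0)
    (lamEta : ℝ) (hlamEta : lamEta = Real.sqrt (∑ i : Fin n, (lam i) ^ 2 * (η i) ^ 2))
    (i₀ : Fin n) (hi₀ : (i₀ : ℕ) = 0) (lam1 : ℝ) (hlam1 : lam1 = lam i₀)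
    (s₀ : ℝ) (hs₀ : 1 < s₀) (g g' : ℝ → ℝ)
    (hg1 : g 1 = lamEta / lam1)
    (hgpos : ∀ s ∈ Ioc (1 : ℝ) s₀, 0 < g s ∧ g s < s * lamEta / lam1)
    (hode : ∀ s ∈ Ioc (1 : ℝ) s₀,
      HasDerivAt g (g' s) s ∧
      g' s = -(lam1 * g s) / Real.sqrt (s ^ 2 * lamEta ^ 2 - lam1 ^ 2 * g s ^ 2)) :
    (∀ s ∈ Ioc (1 : ℝ) s₀,
      Real.sqrt (V (s • η + g s • EuclideanSpace.single i₀ (1 : ℝ))) *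
        Real.sqrt (1 + g' s ^ 2) = Real.sqrt (V (s • η))) ∧
    (Real.sqrt 2 * ∫ s in (1 : ℝ)..s₀,
        Real.sqrt (V (s • η + g s • EuclideanSpace.single i₀ (1 : ℝ))) *
          Real.sqrt (1 + g' s ^ 2)) =
      Real.sqrt 2 * ∫ s in (1 : ℝ)..s₀, Real.sqrt (V (s • η)) := by
  have hlam1pos : 0 < lam1 := hlam1 ▸ hlam i₀
  have hi₀m : (i₀ : ℕ) < m := by omega
  have hηi₀ : η i₀ = 0 := hsupp i₀ hi₀m
  -- sum nonneg and positive
  have hAnonneg : (0 : ℝ) ≤ ∑ i : Fin n, (lam i) ^ 2 * (η i) ^ 2 :=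
    Finset.sum_nonneg fun i _ => by positivity
  have hηne : η ≠ 0 := by
    intro h; rw [h, norm_zero] at hη; norm_num at hη
  have hApos : (0 : ℝ) < ∑ i : Fin n, (lam i) ^ 2 * (η i) ^ 2 := by
    obtain ⟨j, hj⟩ : ∃ j, η j ≠ 0 := by
      by_contra h; push_neg at h; exact hηne (PiLp.ext fun i => by simp [h i])
    have hterm : 0 < (lam j) ^ 2 * (η j) ^ 2 :=
      mul_pos (pow_pos (hlam j) 2) (pow_pos (abs_pos.mpr hj) 2 |>.trans_le (by rw [sq_abs]))
    exact hterm.trans_le (Finset.single_le_sum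
      (f := fun i => (lam i) ^ 2 * (η i) ^ 2) (fun i _ => by positivity)
      (Finset.mem_univ j))
  have hlamEtaPos : 0 < lamEta := hlamEta ▸ Real.sqrt_pos.mpr hApos
  have hlamEtaSq : lamEta ^ 2 = ∑ i : Fin n, (lam i) ^ 2 * (η i) ^ 2 := by
    rw [hlamEta, Real.sq_sqrt hAnonneg]
  -- V along sη
  have hVη : ∀ s : ℝ, V (s • η) = 1 / 2 * (s ^ 2 * lamEta ^ 2) := by
    intro s
    rw [hV]
    have hsum : ∑ i : Fin n,
        (if (i : ℕ) < m then -(lam i) ^ 2 else (lam i) ^ 2) * ((s • η) i) ^ 2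
        = s ^ 2 * lamEta ^ 2 := by
      rw [hlamEtaSq, Finset.mul_sum]
      apply Finset.sum_congr rfl
      intro i _
      have hsm : (s • η) i = s * η i := rfl
      rw [hsm]
      by_cases h : (i : ℕ) < m
      · simp [h, hsupp i h]
      · simp [h]; ring
    rw [hsum]
  -- V along perturbed path
  have hVv : ∀ s : ℝ, V (s • η + g s • EuclideanSpace.single i₀ (1 : ℝ))
      = 1 / 2 * (s ^ 2 * lamEta ^ 2 - lam1 ^ 2 * g s ^ 2) := by
    intro s
    rw [hV]
    have hcomp : ∀ i : Fin n,
        (s • η + g s • EuclideanSpace.single i₀ (1 : ℝ)) i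
          = s * η i + g s * (if i = i₀ then 1 else 0) := by
      intro i
      have : (s • η + g s • EuclideanSpace.single i₀ (1 : ℝ)) i
          = s * η i + g s * (EuclideanSpace.single i₀ (1 : ℝ) i) := rfl
      rw [this, EuclideanSpace.single_apply]
    have hterm : ∀ i : Fin n,
        (if (i : ℕ) < m then -(lam i) ^ 2 else (lam i) ^ 2) *
          ((s • η + g s • EuclideanSpace.single i₀ (1 : ℝ)) i) ^ 2
        = (lam i) ^ 2 * (s * η i) ^ 2
          + (if i = i₀ then -(lam1 ^ 2 * g s ^ 2) else 0) := by
      intro i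
      rw [hcomp i]
      by_cases hii : i = i₀
      · subst hii
        simp [hi₀m, hηi₀, hlam1]
      · by_cases h : (i : ℕ) < m
        · simp [h, hii, hsupp i h]
        · simp [h, hii]
    rw [Finset.sum_congr rfl fun i _ => hterm i, Finset.sum_add_distrib,
      Finset.sum_ite_eq' Finset.univ i₀ fun _ => -(lam1 ^ 2 * g s ^ 2)]
    simp only [Finset.mem_univ, if_true]
    have : ∑ i : Fin n, (lam i) ^ 2 * (s * η i) ^ 2 = s ^ 2 * lamEta ^ 2 := by
      rw [hlamEtaSq, Finset.mul_sum]
      exact Finset.sum_congr rfl fun i _ => by ring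
    rw [this]; ring
  -- pointwise identity
  have hpt : ∀ s ∈ Ioc (1 : ℝ) s₀,
      Real.sqrt (V (s • η + g s • EuclideanSpace.single i₀ (1 : ℝ))) *
        Real.sqrt (1 + g' s ^ 2) = Real.sqrt (V (s • η)) := by
    intro s hs
    obtain ⟨hg0, hglt⟩ := hgpos s hs
    have hspos : (0 : ℝ) < s := lt_trans one_pos hs.1
    have hlt : lam1 * g s < s * lamEta := by
      have h := (lt_div_iff₀ hlam1pos).mp hglt
      calc lam1 * g s = g s * lam1 := mul_comm _ _
        _ < s * lamEta := h
    have hDpos : 0 < s ^ 2 * lamEta ^ 2 - lam1 ^ 2 * g s ^ 2 := by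
      have h2 : 0 < (s * lamEta - lam1 * g s) * (s * lamEta + lam1 * g s) :=
        mul_pos (sub_pos.mpr hlt)
          (add_pos (mul_pos hspos hlamEtaPos) (mul_pos hlam1pos hg0))
      nlinarith [h2]
    set D := s ^ 2 * lamEta ^ 2 - lam1 ^ 2 * g s ^ 2 with hD
    have hg'sq : g' s ^ 2 = lam1 ^ 2 * g s ^ 2 / D := by
      rw [(hode s hs).2]
      rw [div_pow, neg_pow, Real.sq_sqrt hDpos.le]
      ring_nf
    have h1 : 1 + g' s ^ 2 = s ^ 2 * lamEta ^ 2 / D := by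
      rw [hg'sq]
      field_simp
      rw [hD]; ring
    rw [hVv, hVη, h1, ← Real.sqrt_mul (by positivity)]
    congr 1
    field_simp
    ring
  refine ⟨hpt, ?_⟩
  congr 1
  apply intervalIntegral.integral_congr_ae
  have hI : Set.uIoc (1 : ℝ) s₀ = Ioc 1 s₀ := Set.uIoc_of_le hs₀.le
  filter_upwards with s hs
  rw [hI] at hs
  exact hpt s hs
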